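/- arXiv:0907.0402 — 6 statements merged into one kernel-verified Lean document; each statement's English description precedes it below -/
import Mathlib

section
/- If a group G acts on a metric space X by isometries and every orbit G·a has compact closure, then every map ρ : X → X that is a pointwise limit of elements of G is surjective. -/
open Metric Set

/-- If a group `G` of isometries of a complete metric space `X` has all orbit closures
compact, then every pointwise limit `ρ` of elements of `G` is surjective. -/
theorem surjective_of_precompact_orbits {X : Type*} [MetricSpace X] [CompleteSpace X]
    (G : Subgroup (X ≃ᵢ X))
    (horb : ∀ a : X, IsCompact (closure {x | ∃ g ∈ G, g a = x}))
    (ρ : X → X)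
    (hρ : ∀ (F : Finset X) (ε : ℝ), 0 < ε → ∃ g ∈ G, ∀ x ∈ F, dist (g x) (ρ x) < ε) :
    Function.Surjective ρ := by
  -- ρ is an isometry
  have hiso : ∀ a b : X, dist (ρ a) (ρ b) = dist a b := by
    intro a b
    classical
    have key : ∀ ε : ℝ, 0 < ε → |dist (ρ a) (ρ b) - dist a b| ≤ 2 * ε := by
      intro ε hε
      obtain ⟨g, hg, hgF⟩ := hρ {a, b} ε hε
      have ha : dist (g a) (ρ a) < ε := hgF a (by simp)
      have hb : dist (g b) (ρ b) < ε := hgF b (by simp)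
      have hgab : dist (g a) (g b) = dist a b := g.dist_eq a b
      have h1 : dist (ρ a) (ρ b) ≤ dist a b + 2 * ε := by
        calc dist (ρ a) (ρ b) ≤ dist (ρ a) (g a) + dist (g a) (g b) + dist (g b) (ρ b) :=
              dist_triangle4 _ _ _ _
          _ ≤ ε + dist a b + ε := by
              rw [hgab, dist_comm (ρ a) (g a)]; linarith
          _ = dist a b + 2 * ε := by ring
      have h2 : dist a b ≤ dist (ρ a) (ρ b) + 2 * ε := by
        calc dist a b = dist (g a) (g b) := hgab.symm
          _ ≤ dist (g a) (ρ a) + dist (ρ a) (ρ b) + dist (ρ b) (g b) := dist_triangle4 _ _ _ _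
          _ ≤ ε + dist (ρ a) (ρ b) + ε := by
              rw [dist_comm (ρ b) (g b)]; linarith
          _ = dist (ρ a) (ρ b) + 2 * ε := by ring
      rw [abs_le]; constructor <;> linarith
    have : |dist (ρ a) (ρ b) - dist a b| ≤ 0 := by
      by_contra h
      push_neg at h
      have := key (|dist (ρ a) (ρ b) - dist a b| / 4) (by linarith)
      linarith
    have := abs_nonneg (dist (ρ a) (ρ b) - dist a b)
    have : |dist (ρ a) (ρ b) - dist a b| = 0 := le_antisymm ‹_› ‹_›
    have := abs_eq_zero.mp this
    linarith
  intro y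
  set K : Set X := closure {x | ∃ g ∈ G, g y = x} with hK
  have hKcomp : IsCompact K := horb y
  have hyK : y ∈ K := subset_closure ⟨1, G.one_mem, rfl⟩
  -- orbits are G-invariant inside K
  have hGK : ∀ x ∈ K, ∀ g ∈ G, (g : X ≃ᵢ X) x ∈ K := by
    intro x hx g hg
    rw [hK, Metric.mem_closure_iff] at hx ⊢
    intro ε hε
    obtain ⟨z, ⟨h, hh, rfl⟩, hz⟩ := hx ε hε
    refine ⟨(g * h : X ≃ᵢ X) y, ⟨g * h, G.mul_mem hg hh, rfl⟩, ?_⟩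
    have : (g * h : X ≃ᵢ X) y = g (h y) := rfl
    rw [this, g.dist_eq]
    exact hz
  -- ρ maps K into K
  have hmaps : ∀ x ∈ K, ρ x ∈ K := by
    intro x hx
    have h1 : ρ x ∈ closure {z | ∃ g ∈ G, (g : X ≃ᵢ X) x = z} := by
      rw [Metric.mem_closure_iff]
      intro ε hε
      obtain ⟨g, hg, hgF⟩ := hρ {x} ε hε
      exact ⟨g x, ⟨g, hg, rfl⟩, by rw [dist_comm]; exact hgF x (by simp)⟩
    have h2 : {z | ∃ g ∈ G, (g : X ≃ᵢ X) x = z} ⊆ K := by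
      rintro _ ⟨g, hg, rfl⟩
      exact hGK x hx g hg
    exact closure_minimal h2 isClosed_closure h1
  -- iterates stay in K
  have hKiter : ∀ n : ℕ, ρ^[n] y ∈ K := by
    intro n
    induction n with
    | zero => simpa using hyK
    | succ n ih => rw [Function.iterate_succ_apply']; exact hmaps _ ih
  -- iterates are isometric
  have hiter : ∀ (k : ℕ) (a b : X), dist (ρ^[k] a) (ρ^[k] b) = dist a b := by
    intro k
    induction k with
    | zero => simp
    | succ k ih =>
      intro a b
      rw [Function.iterate_succ_apply', Function.iterate_succ_apply', hiso]
      exact ih a b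
  -- ρ '' K is compact, hence closed
  have hcont : Continuous ρ := (Isometry.of_dist_eq hiso).continuous
  have himg : IsCompact (ρ '' K) := hKcomp.image hcont
  have hyimg : y ∈ closure (ρ '' K) := by
    rw [Metric.mem_closure_iff]
    intro ε hε
    -- take convergent subsequence of the iterates
    obtain ⟨L, _, φ, hφ, hlim⟩ := hKcomp.tendsto_subseq (x := fun n => ρ^[n] y) hKiter
    rw [Metric.tendsto_atTop] at hlim
    obtain ⟨N, hN⟩ := hlim (ε / 2) (by linarith)
    have h1 : dist (ρ^[φ N] y) (ρ^[φ (N + 1)] y) < ε := by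
      calc dist (ρ^[φ N] y) (ρ^[φ (N + 1)] y)
          ≤ dist (ρ^[φ N] y) L + dist L (ρ^[φ (N + 1)] y) := dist_triangle _ _ _
        _ < ε / 2 + ε / 2 := by
            have a1 := hN N le_rfl
            have a2 := hN (N + 1) (by omega)
            rw [dist_comm L]
            exact add_lt_add a1 a2
        _ = ε := by ring
    have hlt : φ N < φ (N + 1) := hφ (by omega)
    set k := φ (N + 1) - φ N with hk
    have hkpos : 1 ≤ k := by omega
    have hsum : φ (N + 1) = φ N + k := by omega
    have h2 : dist y (ρ^[k] y) < ε := by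
      have : dist (ρ^[φ N] y) (ρ^[φ N] (ρ^[k] y)) = dist y (ρ^[k] y) := hiter _ _ _
      rw [← this, ← Function.iterate_add_apply, ← hsum]
      exact h1
    obtain ⟨j, hj⟩ : ∃ j, k = j + 1 := ⟨k - 1, by omega⟩
    rw [hj] at h2
    refine ⟨ρ^[j + 1] y, ⟨ρ^[j] y, hKiter j, ?_⟩, h2⟩
    rw [Function.iterate_succ_apply']
  rw [himg.isClosed.closure_eq] at hyimg
  obtain ⟨x, _, hx⟩ := hyimg
  exact ⟨x, hx⟩
end

section
/- Let G ≤ Isom(X,d) with a ∈ X, ε > 0, and suppose there is N such that for every b ∈ G·a the set acl_δ(b) is covered by N balls of radius ε, while G·a contains points pairwise more than 10ε apart and points at distance > 5ε from any given union of N+1 such acl sets. Then there exist a_0, a_1 ∈ G·a such that a_0 ∉ acl_δ(a_1) and a_1 ∉ acl_δ(a_0). -/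
open Metric Set

/-- The `δ`-approximate stabilizer of `b`. -/
def Stab {X : Type*} [MetricSpace X] (G : Subgroup (X ≃ᵢ X)) (b : X) (δ : ℝ) :
    Set (X ≃ᵢ X) :=
  {g | g ∈ G ∧ dist (g b) b < δ}

/-- `acl_δ(b)` at scale `ε`. -/
def acl {X : Type*} [MetricSpace X] (G : Subgroup (X ≃ᵢ X)) (b : X) (δ ε : ℝ) : Set X :=
  {y | y ∈ closure {z | ∃ g ∈ G, g b = z} ∧
    ∃ s : Finset X, {z | ∃ g ∈ Stab G b δ, g y = z} ⊆ ⋃ c ∈ s, ball c ε}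

/-- If each `acl_δ(b)` for `b` in the orbit of `a` is covered by `N` balls of radius `ε`,
while the orbit contains `N+1` points pairwise more than `10ε` apart and, for any choice
of `N+1` orbit points, a point at distance more than `5ε` from the union of their `acl`
sets, then there are `a₀, a₁` in the orbit with `a₀ ∉ acl_δ(a₁)` and `a₁ ∉ acl_δ(a₀)`. -/
theorem exists_mutually_nonAlgebraic {X : Type*} [MetricSpace X] [CompleteSpace X]
    (G : Subgroup (X ≃ᵢ X)) (a : X) (δ ε : ℝ) (hδ : 0 < δ) (hε : 0 < ε) (N : ℕ)
    (hcover : ∀ b ∈ {z | ∃ g ∈ G, g a = z}, ∃ s : Finset X, s.card ≤ N ∧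
      acl G b δ ε ⊆ ⋃ c ∈ s, ball c ε)
    (hsep : ∃ b : Fin (N + 1) → X, (∀ i, b i ∈ {z | ∃ g ∈ G, g a = z}) ∧
      ∀ i j, i ≠ j → 10 * ε < dist (b i) (b j))
    (hfar : ∀ b : Fin (N + 1) → X, (∀ i, b i ∈ {z | ∃ g ∈ G, g a = z}) →
      ∃ c ∈ {z | ∃ g ∈ G, g a = z}, ∀ i, ∀ y ∈ acl G (b i) δ ε, 5 * ε < dist c y) :
    ∃ a₀ ∈ {z | ∃ g ∈ G, g a = z}, ∃ a₁ ∈ {z | ∃ g ∈ G, g a = z},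
      a₀ ∉ acl G a₁ δ ε ∧ a₁ ∉ acl G a₀ δ ε := by

  obtain ⟨b, hb, hbsep⟩ := hsep
  obtain ⟨c, hc, hcfar⟩ := hfar b hb
  obtain ⟨s, hcard, hsub⟩ := hcover c hc
  -- pigeonhole: some b i is not in the union of balls covering acl c
  have : ∃ i, b i ∉ ⋃ x ∈ s, ball x ε := by
    by_contra h
    push_neg at h
    have hmaps : ∀ i : Fin (N + 1), ∃ x ∈ s, b i ∈ ball x ε := by
      intro i
      simpa using h i
    choose f hf hfb using hmaps
    have hcardlt : s.card < (Finset.univ : Finset (Fin (N + 1))).card := by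
      simpa using Nat.lt_succ_of_le hcard
    obtain ⟨i, _, j, _, hij, hfij⟩ :=
      Finset.exists_ne_map_eq_of_card_lt_of_maps_to hcardlt (fun i _ => hf i)
    have h1 : dist (b i) (b j) < 2 * ε := by
      have h1 := hfb i
      have h2 := hfb j
      rw [mem_ball] at h1 h2
      calc dist (b i) (b j) ≤ dist (b i) (f i) + dist (f j) (b j) := by
              rw [hfij]; exact dist_triangle _ _ _
        _ < ε + ε := by rw [dist_comm (f j) (b j)]; exact add_lt_add h1 h2
        _ = 2 * ε := by ring
    have h2 := hbsep i j hij
    linarith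
  obtain ⟨i, hi⟩ := this
  refine ⟨c, hc, b i, hb i, ?_, ?_⟩
  · intro hmem
    have := hcfar i c hmem
    simp at this
    linarith
  · intro hmem
    exact hi (hsub hmem)
end

section
/- If M is an approximately ultrahomogeneous Polish relational metric structure, then every morphism of M (a map preserving all predicates, in particular distance-preserving) is a pointwise limit of automorphisms of M. -/
open Metric Set

/-- Two `n`-tuples have the same quantifier-free type if all predicates (including the
distance) agree on all corresponding subtuples. -/
def SameQFType {M : Type*} [MetricSpace M] {ι : Type*} (k : ι → ℕ)
    (P : ∀ i, (Fin (k i) → M) → ℝ) {n : ℕ} (a b : Fin n → M) : Prop :=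
  (∀ s t, dist (a s) (a t) = dist (b s) (b t)) ∧
  ∀ (i : ι) (j : Fin (k i) → Fin n), P i (a ∘ j) = P i (b ∘ j)

/-- A morphism of the relational metric structure: a map preserving all predicates,
in particular (since the distance is among the predicates) distance-preserving. -/
def IsMorphism {M : Type*} [MetricSpace M] {ι : Type*} (k : ι → ℕ)
    (P : ∀ i, (Fin (k i) → M) → ℝ) (f : M → M) : Prop :=
  Isometry f ∧ ∀ (i : ι) (x : Fin (k i) → M), P i (f ∘ x) = P i x

/-- An automorphism is a surjective morphism. -/
def IsAutomorphism {M : Type*} [MetricSpace M] {ι : Type*} (k : ι → ℕ)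
    (P : ∀ i, (Fin (k i) → M) → ℝ) (f : M → M) : Prop :=
  IsMorphism k P f ∧ Function.Surjective f

/-- Approximate ultrahomogeneity: tuples with the same quantifier-free type can be
`ε`-matched by an automorphism. -/
def ApproxUltrahomogeneous {M : Type*} [MetricSpace M] {ι : Type*} (k : ι → ℕ)
    (P : ∀ i, (Fin (k i) → M) → ℝ) : Prop :=
  ∀ (n : ℕ) (a b : Fin n → M), SameQFType k P a b → ∀ ε : ℝ, 0 < ε →
    ∃ g : M → M, IsAutomorphism k P g ∧ ∀ s, dist (g (a s)) (b s) ≤ ε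

/-- Every morphism of an approximately ultrahomogeneous Polish relational metric
structure is a pointwise limit of automorphisms. -/
theorem morphism_pointwiseLimit_of_automorphisms {M : Type*} [MetricSpace M]
    [CompleteSpace M] [TopologicalSpace.SeparableSpace M]
    (hd : ∀ x y : M, dist x y ≤ 1)
    {ι : Type*} (k : ι → ℕ) (P : ∀ i, (Fin (k i) → M) → ℝ)
    (hUC : ∀ i, UniformContinuous (P i))
    (hrange : ∀ i x, P i x ∈ Set.Icc (0:ℝ) 1)
    (hhom : ApproxUltrahomogeneous k P)
    (ρ : M → M) (hρ : IsMorphism k P ρ) :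
    ∀ (F : Finset M) (ε : ℝ), 0 < ε →
      ∃ g : M → M, IsAutomorphism k P g ∧ ∀ x ∈ F, dist (g x) (ρ x) < ε := by
  intro F ε hε
  set n := F.card
  set a : Fin n → M := fun s => (F.equivFin.symm s : M) with ha
  have hqf : SameQFType k P a (ρ ∘ a) := by
    constructor
    · intro s t
      exact (hρ.1.dist_eq (a s) (a t)).symm
    · intro i j
      have : (ρ ∘ a) ∘ j = ρ ∘ (a ∘ j) := rfl
      rw [this, hρ.2 i (a ∘ j)]
  obtain ⟨g, hg, hgd⟩ := hhom n a (ρ ∘ a) hqf (ε / 2) (by linarith)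
  refine ⟨g, hg, ?_⟩
  intro x hx
  have := hgd (F.equivFin ⟨x, hx⟩)
  simp only [ha, Function.comp, Equiv.symm_apply_apply] at this
  calc dist (g x) (ρ x) ≤ ε / 2 := this
    _ < ε := by linarith
end

section
/- Let (X,d) be a Polish metric space with d ≤ 1 and G ≤ Isom(X,d) a closed subgroup. Define a relational metric structure M on X by adding, for each n and each closure-of-diagonal-orbit class C ⊆ X^n, the predicate P_C(x) = min(1, d_∞(x, C)). Then every element of G is an automorphism of M, and M is approximately ultrahomogeneous. -/
open Metric Set

/-- The predicates of the canonical structure on `X` associated with `G ≤ Isom(X,d)`: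
for each `n` and each tuple `y : Fin n → X`, the predicate measuring (truncated)
sup-distance to the closure of the diagonal `G`-orbit of `y`. -/
noncomputable def orbitPred {X : Type*} [MetricSpace X] (G : Subgroup (X ≃ᵢ X)) :
    ∀ p : (Σ n : ℕ, Fin n → X), (Fin p.1 → X) → ℝ :=
  fun p x => min 1 (infDist x (closure {w : Fin p.1 → X | ∃ g ∈ G, (fun i => g (p.2 i)) = w}))

/-- Post-composition with an isometric equivalence is an isometric equivalence of
tuple spaces. -/
def tupleIso {X : Type*} [MetricSpace X] (g : X ≃ᵢ X) (n : ℕ) :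
    (Fin n → X) ≃ᵢ (Fin n → X) where
  toEquiv := Equiv.piCongrRight fun _ => g.toEquiv
  isometry_toFun := by
    intro x y
    simp [edist_pi_def, Equiv.piCongrRight, IsometryEquiv.edist_eq]

lemma tupleIso_image_orbit {X : Type*} [MetricSpace X] (G : Subgroup (X ≃ᵢ X))
    {g : X ≃ᵢ X} (hg : g ∈ G) (n : ℕ) (y : Fin n → X) :
    (tupleIso g n) '' {w : Fin n → X | ∃ h ∈ G, (fun i => h (y i)) = w} =
      {w : Fin n → X | ∃ h ∈ G, (fun i => h (y i)) = w} := by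
  ext w
  constructor
  · rintro ⟨v, ⟨h, hh, rfl⟩, rfl⟩
    exact ⟨g * h, mul_mem hg hh, rfl⟩
  · rintro ⟨h, hh, rfl⟩
    exact ⟨fun i => (g⁻¹ * h) (y i), ⟨g⁻¹ * h, mul_mem (inv_mem hg) hh, rfl⟩, by
      funext i
      simp [tupleIso, Equiv.piCongrRight, IsometryEquiv.mul_apply]⟩

/-- Every element of `G` is an automorphism of the structure `M` obtained by adding to
`X` the distance-to-orbit-closure predicates, and this structure is approximately
ultrahomogeneous. -/
theorem orbitStructure_autos_and_homogeneous {X : Type*} [MetricSpace X]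
    [CompleteSpace X] [TopologicalSpace.SeparableSpace X]
    (hd : ∀ x y : X, dist x y ≤ 1) (G : Subgroup (X ≃ᵢ X)) :
    (∀ g ∈ G, IsAutomorphism (fun p : (Σ n : ℕ, Fin n → X) => p.1) (orbitPred G) ⇑g) ∧
    ApproxUltrahomogeneous (fun p : (Σ n : ℕ, Fin n → X) => p.1) (orbitPred G) := by
  have key : ∀ g ∈ G, ∀ (p : (Σ n : ℕ, Fin n → X)) (x : Fin p.1 → X),
      orbitPred G p (⇑g ∘ x) = orbitPred G p x := by
    intro g hg p x
    unfold orbitPred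
    congr 1
    set S := {w : Fin p.1 → X | ∃ h ∈ G, (fun i => h (p.2 i)) = w} with hS
    have h1 : (⇑g ∘ x) = (tupleIso g p.1) x := rfl
    have h2 : (tupleIso g p.1) '' closure S = closure S := by
      have h3 := (tupleIso g p.1).toHomeomorph.image_closure S
      rw [show ⇑(tupleIso g p.1).toHomeomorph = ⇑(tupleIso g p.1) from rfl] at h3
      rw [h3, tupleIso_image_orbit G hg]
    rw [h1, ← h2, infDist_image (tupleIso g p.1).isometry, h2]
  have auto : ∀ g ∈ G, IsAutomorphism (fun p : (Σ n : ℕ, Fin n → X) => p.1)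
      (orbitPred G) ⇑g := by
    intro g hg
    exact ⟨⟨g.isometry, key g hg⟩, g.surjective⟩
  refine ⟨auto, ?_⟩
  intro n a b hab ε hε
  have hmem : a ∈ {w : Fin n → X | ∃ h ∈ G, (fun i => h (a i)) = w} :=
    ⟨1, one_mem G, rfl⟩
  have hne : ({w : Fin n → X | ∃ h ∈ G, (fun i => h (a i)) = w}).Nonempty := ⟨a, hmem⟩
  have hPa : orbitPred G ⟨n, a⟩ a = 0 := by
    unfold orbitPred
    rw [infDist_zero_of_mem (subset_closure hmem)]
    simp
  have hPb : orbitPred G ⟨n, a⟩ b = 0 := by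
    have := hab.2 ⟨n, a⟩ id
    simpa [hPa] using this.symm
  have hb : b ∈ closure {w : Fin n → X | ∃ h ∈ G, (fun i => h (a i)) = w} := by
    unfold orbitPred at hPb
    have h0 : infDist b (closure {w : Fin n → X | ∃ h ∈ G, (fun i => h (a i)) = w}) = 0 := by
      rcases min_eq_iff.mp hPb with h | h
      · linarith [h.1]
      · exact h.1
    rw [← closure_closure]
    exact (mem_closure_iff_infDist_zero hne.closure).mpr h0
  rcases Metric.mem_closure_iff.mp hb ε hε with ⟨w, ⟨h, hh, rfl⟩, hw⟩
  refine ⟨⇑h, auto h hh, fun s => ?_⟩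
  have h1 : dist (h (a s)) (b s) ≤ dist (fun i => h (a i)) b :=
    dist_le_pi_dist (fun i => h (a i)) b s
  rw [dist_comm] at hw
  exact h1.trans hw.le
end

section
/- With the structure M of the previous construction (predicates P_C measuring distance to closures of diagonal G-orbits), every automorphism π of M is a pointwise limit of elements of G; hence if G is closed in Isom(X,d), then Aut(M) = G. -/
open Metric Set

/-- approximation lemma -/
theorem approx_aux {X : Type*} [MetricSpace X] (G : Subgroup (X ≃ᵢ X))
    (π : X → X)
    (hπ : IsAutomorphism (fun p : (Σ n : ℕ, Fin n → X) => p.1) (orbitPred G) π)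
    (F : Finset X) (ε : ℝ) (hε : 0 < ε) :
    ∃ g ∈ G, ∀ x ∈ F, dist (g x) (π x) < ε := by
  classical
  set n := F.card with hn
  set a : Fin n → X := fun i => ((F.equivFin.symm i : F) : X) with ha
  set S : Set (Fin n → X) := {w | ∃ g ∈ G, (fun i => g (a i)) = w} with hS
  have haS : a ∈ S := ⟨1, G.one_mem, rfl⟩
  have key := hπ.1.2 ⟨n, a⟩ a
  have h0 : orbitPred G ⟨n, a⟩ a = 0 := by
    have h1 : infDist a (closure S) = 0 :=
      infDist_zero_of_mem (subset_closure haS)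
    simp [orbitPred, ← hS, h1]
  rw [h0] at key
  have hinf : infDist (π ∘ a) (closure S) = 0 := by
    by_contra h
    have hpos : 0 < infDist (π ∘ a) (closure S) :=
      lt_of_le_of_ne infDist_nonneg (Ne.symm h)
    have : (0:ℝ) < min 1 (infDist (π ∘ a) (closure S)) := lt_min one_pos hpos
    rw [show min 1 (infDist (π ∘ a) (closure S)) = orbitPred G ⟨n, a⟩ (π ∘ a) from rfl,
      key] at this
    exact lt_irrefl _ this
  have hmem : π ∘ a ∈ closure S := by
    exact (isClosed_closure.mem_iff_infDist_zero
      ⟨a, subset_closure haS⟩).2 hinf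
  obtain ⟨w, hwS, hw⟩ := Metric.mem_closure_iff.1 hmem ε hε
  obtain ⟨g, hgG, hgw⟩ := hwS
  refine ⟨g, hgG, fun x hx => ?_⟩
  set i : Fin n := F.equivFin ⟨x, hx⟩ with hi
  have hax : a i = x := by simp [ha, hi]
  have := (dist_le_pi_dist (π ∘ a) w i).trans_lt hw
  rw [← hgw] at this
  simpa [hax, dist_comm] using this

/-- Elements of `G` preserve the orbit predicates. -/
theorem orbitPred_comp {X : Type*} [MetricSpace X] (G : Subgroup (X ≃ᵢ X))
    (g : X ≃ᵢ X) (hg : g ∈ G) (p : Σ n : ℕ, Fin n → X) (x : Fin p.1 → X) :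
    orbitPred G p (⇑g ∘ x) = orbitPred G p x := by
  classical
  set S : Set (Fin p.1 → X) := {w | ∃ h ∈ G, (fun i => h (p.2 i)) = w} with hS
  set Φ : (Fin p.1 → X) ≃ᵢ (Fin p.1 → X) :=
    ⟨Equiv.piCongrRight (fun _ => g.toEquiv),
      Isometry.piMap (fun _ => ⇑g) (fun _ => g.isometry)⟩ with hΦ
  have hΦapp : ∀ w : Fin p.1 → X, Φ w = ⇑g ∘ w := fun w => rfl
  have himg : ⇑Φ '' S = S := by
    ext w
    constructor
    · rintro ⟨v, ⟨h, hh, rfl⟩, rfl⟩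
      exact ⟨g * h, G.mul_mem hg hh, rfl⟩
    · rintro ⟨h, hh, rfl⟩
      exact ⟨fun i => (g⁻¹ * h) (p.2 i), ⟨g⁻¹ * h, G.mul_mem (G.inv_mem hg) hh, rfl⟩,
        funext fun i => by simp [hΦapp]⟩
  have hcl : ⇑Φ '' closure S = closure S := by
    have h2 := Φ.toHomeomorph.image_closure S
    rw [show (⇑Φ.toHomeomorph) = ⇑Φ from rfl] at h2
    rw [h2, himg]
  have hkey : infDist (⇑g ∘ x) (closure S) = infDist x (closure S) := by
    conv_lhs => rw [← hcl, ← hΦapp]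
    exact Metric.infDist_image Φ.isometry
  simp only [orbitPred, ← hS, hkey]

/-- Every automorphism of the structure with the distance-to-orbit-closure predicates is a
pointwise limit of elements of `G`; hence if `G` is closed (under pointwise limits) in
`Isom(X,d)`, the automorphisms of the structure are exactly the elements of `G`. -/
theorem orbitStructure_aut_eq_G {X : Type*} [MetricSpace X]
    [CompleteSpace X] [TopologicalSpace.SeparableSpace X]
    (hd : ∀ x y : X, dist x y ≤ 1) (G : Subgroup (X ≃ᵢ X)) :
    (∀ π : X → X, IsAutomorphism (fun p : (Σ n : ℕ, Fin n → X) => p.1) (orbitPred G) π →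
      ∀ (F : Finset X) (ε : ℝ), 0 < ε → ∃ g ∈ G, ∀ x ∈ F, dist (g x) (π x) < ε) ∧
    ((∀ π : X ≃ᵢ X,
        (∀ (F : Finset X) (ε : ℝ), 0 < ε → ∃ g ∈ G, ∀ x ∈ F, dist (g x) (π x) < ε) →
        π ∈ G) →
      ∀ π : X → X,
        IsAutomorphism (fun p : (Σ n : ℕ, Fin n → X) => p.1) (orbitPred G) π ↔
          ∃ g ∈ G, ∀ x, g x = π x) := by
  constructor
  · intro π hπ F ε hε
    exact approx_aux G π hπ F ε hε
  · intro hclosed π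
    constructor
    · intro hπ
      have hbij : Function.Bijective π := ⟨hπ.1.1.injective, hπ.2⟩
      let e : X ≃ᵢ X := ⟨Equiv.ofBijective π hbij, hπ.1.1⟩
      have he : ∀ x, e x = π x := fun x => rfl
      have heG : e ∈ G := by
        apply hclosed
        intro F ε hε
        obtain ⟨g, hg, hgx⟩ := approx_aux G π hπ F ε hε
        exact ⟨g, hg, fun x hx => by rw [he]; exact hgx x hx⟩
      exact ⟨e, heG, he⟩
    · rintro ⟨g, hg, hgx⟩
      have hπg : π = ⇑g := funext fun x => (hgx x).symm
      subst hπg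
      exact ⟨⟨g.isometry, fun p x => orbitPred_comp G g hg p x⟩, g.surjective⟩
end

section
/- Let (z_n) be a dense sequence in a metric space X and ε > 0. Then there exists a uniformly continuous function f : X² → [0,1] such that for every n, f = 1 on B(z_n, ε/10) × (X \ ⋃_{m ≤ n} B(z_m, ε/2)) and f = 0 on (X \ ⋃_{m < n} B(z_m, ε/2)) × B(z_n, ε/10). -/
open Metric Set

/-- Given a dense sequence `(z_n)` in a metric space `X` and `ε > 0`, there is a uniformly
continuous `f : X² → [0,1]` which, for every `n`, equals `1` on
`B(z_n, ε/10) × (X \ ⋃_{m ≤ n} B(z_m, ε/2))` and `0` on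
`(X \ ⋃_{m < n} B(z_m, ε/2)) × B(z_n, ε/10)`. -/
theorem exists_oscillating_function {X : Type*} [MetricSpace X]
    (z : ℕ → X) (hz : DenseRange z) (ε : ℝ) (hε : 0 < ε) :
    ∃ f : X × X → ℝ, UniformContinuous f ∧ (∀ p, f p ∈ Set.Icc (0:ℝ) 1) ∧
      (∀ n : ℕ, ∀ x ∈ ball (z n) (ε / 10), ∀ y ∉ ⋃ m ≤ n, ball (z m) (ε / 2),
        f (x, y) = 1) ∧
      (∀ n : ℕ, ∀ x ∉ ⋃ m < n, ball (z m) (ε / 2), ∀ y ∈ ball (z n) (ε / 10),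
        f (x, y) = 0) := by
  classical
  set B : Set (X × X) :=
    ⋃ n : ℕ, ((⋃ m < n, ball (z m) (ε / 2))ᶜ ×ˢ ball (z n) (ε / 10)) with hB
  have hε5 : (0:ℝ) < ε / 5 := by linarith
  refine ⟨fun p => min 1 ((ε / 5)⁻¹ * infDist p B), ?_, ?_, ?_, ?_⟩
  · have h1 : LipschitzWith (‖(ε / 5)⁻¹‖₊ * 1)
        (fun p : X × X => (ε / 5)⁻¹ • infDist p B) :=
      (lipschitzWith_smul ((ε / 5)⁻¹ : ℝ)).comp (lipschitz_infDist_pt B)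
    have h2 : LipschitzWith (‖(ε / 5)⁻¹‖₊ * 1)
        (fun p : X × X => min 1 ((ε / 5)⁻¹ * infDist p B)) := by
      simpa [smul_eq_mul] using h1.const_min 1
    exact h2.uniformContinuous
  · intro p
    exact ⟨le_min zero_le_one (mul_nonneg (inv_nonneg.2 hε5.le) infDist_nonneg),
      min_le_left _ _⟩
  · -- f = 1 on the "A" pieces
    intro n x hx y hy
    have key : ∀ q ∈ B, ε / 5 ≤ dist (x, y) q := by
      intro q hq
      obtain ⟨k, hq⟩ := mem_iUnion.1 hq
      obtain ⟨hq1, hq2⟩ := hq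
      rcases le_or_gt k n with hk | hk
      · have hy' : ε / 2 ≤ dist y (z k) := by
          by_contra h
          exact hy (mem_iUnion₂.2 ⟨k, hk, mem_ball.2 (lt_of_not_ge h)⟩)
        have hq2' : dist q.2 (z k) < ε / 10 := mem_ball.1 hq2
        have h2 : ε / 5 ≤ dist y q.2 := by
          have := dist_triangle y q.2 (z k)
          linarith
        calc ε / 5 ≤ dist y q.2 := h2
          _ ≤ dist (x, y) q := by rw [Prod.dist_eq]; exact le_max_right _ _
      · have hq1' : ε / 2 ≤ dist q.1 (z n) := by
          by_contra h
          exact hq1 (mem_iUnion₂.2 ⟨n, hk, mem_ball.2 (lt_of_not_ge h)⟩)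
        have hx' : dist x (z n) < ε / 10 := mem_ball.1 hx
        have h2 : ε / 5 ≤ dist x q.1 := by
          have := dist_triangle q.1 x (z n)
          rw [dist_comm x q.1]
          linarith
        calc ε / 5 ≤ dist x q.1 := h2
          _ ≤ dist (x, y) q := by rw [Prod.dist_eq]; exact le_max_left _ _
    have hBne : B.Nonempty := by
      refine ⟨(z 0, z 0), mem_iUnion.2 ⟨0, ?_, mem_ball_self (by linarith)⟩⟩
      simp
    have hinf : ε / 5 ≤ infDist (x, y) B := by
      by_contra h
      obtain ⟨q, hqB, hq⟩ := (infDist_lt_iff hBne).1 (lt_of_not_ge h)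
      exact absurd (key q hqB) (not_le.2 hq)
    have h1 : (1:ℝ) ≤ (ε / 5)⁻¹ * infDist (x, y) B := by
      rw [← div_eq_inv_mul]
      exact (one_le_div hε5).2 hinf
    show min 1 ((ε / 5)⁻¹ * infDist (x, y) B) = 1
    exact min_eq_left h1
  · intro n x hx y hy
    have hmem : (x, y) ∈ B := mem_iUnion.2 ⟨n, Set.mem_prod.2 ⟨hx, hy⟩⟩
    show min 1 ((ε / 5)⁻¹ * infDist (x, y) B) = 0
    rw [infDist_zero_of_mem hmem]
    simp
end
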